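/- Suppose the coefficients c_0, …, c_r ∈ C[x,y] satisfy deg_x c_i ≤ d and deg_y c_i ≤ h for all i. Then the polynomial P = Σ_{i=0}^{r} c_i · α^i · S_x^i(p) · Π_{m=1}^{M} P_{i,m} satisfies deg_x P ≤ d + θ_x + r·μ, deg_y P ≤ h + θ_y + r·ξ, and deg_k P ≤ θ_k + r·μ. Consequently, P has at most (d + θ_x + r·μ + 1)(h + θ_y + r·ξ + 1)(θ_k + r·μ + 1) nonzero monomials in x, y, k. -/

import Mathlib

open MvPolynomial

noncomputable section

/-- `C[x,y,k]`, realized as `MvPolynomial (Fin 3) C` with `x = X 0`, `y = X 1`, `k = X 2`. -/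
abbrev P3 (C : Type*) [CommSemiring C] := MvPolynomial (Fin 3) C

/-- The embedding `C[y] → C[x,y,k]` sending the indeterminate to `y = X 1`. -/
def toY {C : Type*} [CommSemiring C] (q : Polynomial C) : P3 C :=
  Polynomial.aeval (X 1 : P3 C) q

/-- The rising factorial `q^{(n)} = q(q+1)⋯(q+n−1)`, with `q^{(0)} = 1`. -/
def risingFactorial {C : Type*} [CommSemiring C] (q : P3 C) (n : ℕ) : P3 C :=
  ∏ j ∈ Finset.range n, (q + (j : P3 C))

/-- The shift `S_x` on `C[x,y,k]`: `x ↦ x+1`, `y ↦ y`, `k ↦ k`. -/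
def SX3 (C : Type*) [CommSemiring C] : P3 C →ₐ[C] P3 C := aeval ![X 0 + 1, X 1, X 2]

/-- The shift `S_k` on `C[x,y,k]`: `x ↦ x`, `y ↦ y`, `k ↦ k+1`. -/
def SK3 (C : Type*) [CommSemiring C] : P3 C →ₐ[C] P3 C := aeval ![X 0, X 1, X 2 + 1]

/-- The fixed data of a proper hypergeometric term
`H = p α^x β^k Π_m Γ(A_m)Γ(B_m)/(Γ(U_m)Γ(V_m))`, together with a fixed order `r`. -/
structure HyperData (C : Type*) [Field C] [CharZero C] where
  M : ℕ
  r : ℕ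
  a : Fin M → ℕ
  a' : Fin M → ℕ
  b : Fin M → ℕ
  b' : Fin M → ℕ
  u : Fin M → ℕ
  u' : Fin M → ℕ
  v : Fin M → ℕ
  v' : Fin M → ℕ
  a'' : Fin M → Polynomial C
  b'' : Fin M → Polynomial C
  u'' : Fin M → Polynomial C
  v'' : Fin M → Polynomial C
  p : P3 C
  hp : p ≠ 0
  α : Polynomial C
  β : Polynomial C
  hα : α ≠ 0
  hβ : β ≠ 0

namespace HyperData

variable {C : Type*} [Field C] [CharZero C] (H : HyperData C)

/-- `A_m = a_m x + a'_m k + a''_m`. -/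
def A (m : Fin H.M) : P3 C := (H.a m : P3 C) * X 0 + (H.a' m : P3 C) * X 2 + toY (H.a'' m)

/-- `B_m = b_m x − b'_m k + b''_m`. -/
def B (m : Fin H.M) : P3 C := (H.b m : P3 C) * X 0 - (H.b' m : P3 C) * X 2 + toY (H.b'' m)

/-- `U_m = u_m x + u'_m k + u''_m`. -/
def U (m : Fin H.M) : P3 C := (H.u m : P3 C) * X 0 + (H.u' m : P3 C) * X 2 + toY (H.u'' m)

/-- `V_m = v_m x − v'_m k + v''_m`. -/
def V (m : Fin H.M) : P3 C := (H.v m : P3 C) * X 0 - (H.v' m : P3 C) * X 2 + toY (H.v'' m)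

/-- `P_{i,m} = A_m^{(i a_m)} B_m^{(i b_m)} (U_m+i u_m)^{((r−i)u_m)} (V_m+i v_m)^{((r−i)v_m)}`. -/
def Pim (i : ℕ) (m : Fin H.M) : P3 C :=
  risingFactorial (H.A m) (i * H.a m) * risingFactorial (H.B m) (i * H.b m) *
    risingFactorial (H.U m + ((i * H.u m : ℕ) : P3 C)) ((H.r - i) * H.u m) *
    risingFactorial (H.V m + ((i * H.v m : ℕ) : P3 C)) ((H.r - i) * H.v m)

/-- `Q = β Π_m A_m^{(a'_m)} (V_m + r v_m − v'_m)^{(v'_m)}`. -/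
def Q : P3 C :=
  toY H.β * ∏ m, risingFactorial (H.A m) (H.a' m) *
    risingFactorial (H.V m + ((H.r * H.v m : ℕ) : P3 C) - ((H.v' m : ℕ) : P3 C)) (H.v' m)

/-- `R = Π_m (U_m + r u_m − u'_m)^{(u'_m)} B_m^{(b'_m)}`. -/
def R : P3 C :=
  ∏ m, risingFactorial (H.U m + ((H.r * H.u m : ℕ) : P3 C) - ((H.u' m : ℕ) : P3 C)) (H.u' m) *
    risingFactorial (H.B m) (H.b' m)

/-- `θ_x = deg_x p`. -/
def θx : ℕ := degreeOf 0 H.p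

/-- `θ_y = deg_y p`. -/
def θy : ℕ := degreeOf 1 H.p

/-- `θ_k = deg_k p`. -/
def θk : ℕ := degreeOf 2 H.p

/-- `μ = max(Σ_m (a_m + b_m), Σ_m (u_m + v_m))`. -/
def μ : ℕ := max (∑ m, (H.a m + H.b m)) (∑ m, (H.u m + H.v m))

/-- `ν = max(Σ_m (a'_m + v'_m), Σ_m (u'_m + b'_m))`. -/
def ν : ℕ := max (∑ m, (H.a' m + H.v' m)) (∑ m, (H.u' m + H.b' m))

/-- `ξ = max(deg_y α + Σ_m (a_m deg_y A_m + b_m deg_y B_m), Σ_m (u_m deg_y U_m + v_m deg_y V_m))`. -/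
def ξ : ℕ :=
  max (H.α.natDegree + ∑ m, (H.a m * degreeOf 1 (H.A m) + H.b m * degreeOf 1 (H.B m)))
    (∑ m, (H.u m * degreeOf 1 (H.U m) + H.v m * degreeOf 1 (H.V m)))

/-- `η = max(deg_y β + Σ_m (a'_m deg_y A_m + v'_m deg_y V_m), Σ_m (u'_m deg_y U_m + b'_m deg_y B_m))`. -/
def η : ℕ :=
  max (H.β.natDegree + ∑ m, (H.a' m * degreeOf 1 (H.A m) + H.v' m * degreeOf 1 (H.V m)))
    (∑ m, (H.u' m * degreeOf 1 (H.U m) + H.b' m * degreeOf 1 (H.B m)))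

/-- `P = Σ_{i=0}^{r} c_i α^i S_x^i(p) Π_m P_{i,m}`. -/
def P (c : ℕ → P3 C) : P3 C :=
  ∑ i ∈ Finset.range (H.r + 1), c i * toY H.α ^ i * (⇑(SX3 C))^[i] H.p * ∏ m, H.Pim i m

end HyperData

end

section AuxLemmas

open MvPolynomial Finset

variable {C : Type*} [CommSemiring C]

lemma degreeOf_natCast' (j : Fin 3) (n : ℕ) :
    degreeOf j ((n : P3 C)) = 0 := by
  rw [show ((n : P3 C)) = MvPolynomial.C ((n : C)) from
    (map_natCast (MvPolynomial.C : C →+* P3 C) n).symm, degreeOf_C]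

lemma degreeOf_toY_le' [Nontrivial C] (q : Polynomial C) (j : Fin 3) :
    degreeOf j (toY q : P3 C) ≤ if j = 1 then q.natDegree else 0 := by
  rw [toY]
  conv_lhs => rw [q.as_sum_support, map_sum]
  refine (degreeOf_sum_le _ _ _).trans (Finset.sup_le fun i hi => ?_)
  rw [Polynomial.aeval_monomial]
  refine (degreeOf_mul_le _ _ _).trans ?_
  rw [MvPolynomial.algebraMap_eq, degreeOf_C, zero_add]
  refine (degreeOf_pow_le _ _ _).trans ?_
  rw [degreeOf_X]
  split_ifs with h
  · simpa using Polynomial.le_natDegree_of_mem_supp i hi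
  · simp

lemma degreeOf_rf_le (q : P3 C) (n : ℕ) (j : Fin 3) :
    degreeOf j (risingFactorial q n) ≤ n * degreeOf j q := by
  rw [risingFactorial]
  refine (degreeOf_prod_le _ _ _).trans ?_
  refine le_trans (Finset.sum_le_sum fun x _ => (degreeOf_add_le j q _).trans
    (max_le le_rfl (by rw [degreeOf_natCast']; exact Nat.zero_le _))) ?_
  simp [Finset.sum_const, Nat.mul_comm]

lemma degreeOf_aeval_le' (j : Fin 3) (f : Fin 3 → P3 C)
    (hf : ∀ n, degreeOf j (f n) ≤ if n = j then 1 else 0) (q : P3 C) :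
    degreeOf j (aeval f q) ≤ degreeOf j q := by
  classical
  rw [aeval_def, eval₂_eq]
  refine (degreeOf_sum_le _ _ _).trans (Finset.sup_le fun s hs => ?_)
  refine (degreeOf_mul_le _ _ _).trans ?_
  rw [MvPolynomial.algebraMap_eq, degreeOf_C, zero_add]
  refine le_trans ((degreeOf_prod_le _ _ _).trans (Finset.sum_le_sum
    (fun n _ => (degreeOf_pow_le _ _ _).trans (Nat.mul_le_mul_left _ (hf n))))) ?_
  simp only [mul_ite, mul_one, mul_zero, Finset.sum_ite_eq']
  split_ifs with h
  · exact monomial_le_degreeOf _ hs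
  · exact Nat.zero_le _

lemma degreeOf_SX3_le [Nontrivial C] (j : Fin 3) (q : P3 C) :
    degreeOf j ((SX3 C) q) ≤ degreeOf j q := by
  refine degreeOf_aeval_le' j _ (fun n => ?_) q
  fin_cases n
  · show degreeOf j (X 0 + 1 : P3 C) ≤ _
    refine (degreeOf_add_le _ _ _).trans ?_
    rw [← C_1, degreeOf_C, degreeOf_X]
    by_cases h : j = 0 <;> simp [h, eq_comm]
  · show degreeOf j (X 1 : P3 C) ≤ _
    rw [degreeOf_X]
    by_cases h : j = 1 <;> simp [h, eq_comm]
  · show degreeOf j (X 2 : P3 C) ≤ _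
    rw [degreeOf_X]
    by_cases h : j = 2 <;> simp [h, eq_comm]

lemma degreeOf_SX3_iterate_le [Nontrivial C] (j : Fin 3) (i : ℕ) (q : P3 C) :
    degreeOf j ((⇑(SX3 C))^[i] q) ≤ degreeOf j q := by
  induction i with
  | zero => simp
  | succ n ih => rw [Function.iterate_succ_apply']; exact (degreeOf_SX3_le j _).trans ih

lemma card_support_le3 (p : P3 C) :
    p.support.card ≤ (degreeOf 0 p + 1) * (degreeOf 1 p + 1) * (degreeOf 2 p + 1) := by
  classical
  have h := Finset.card_le_card_of_injOn (f := fun s : Fin 3 →₀ ℕ => ((s 0, s 1), s 2))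
    (s := p.support)
    (t := (Finset.range (degreeOf 0 p + 1) ×ˢ Finset.range (degreeOf 1 p + 1)) ×ˢ
      Finset.range (degreeOf 2 p + 1))
    (fun s hs => by
      simp only [Finset.coe_product, Set.mem_prod, Finset.mem_coe, Finset.mem_product, Finset.mem_range, Nat.lt_succ_iff]
      exact ⟨⟨monomial_le_degreeOf _ hs, monomial_le_degreeOf _ hs⟩,
        monomial_le_degreeOf _ hs⟩)
    (fun s hs t ht hst => by
      simp only [Prod.mk.injEq] at hst
      ext i
      fin_cases i
      exacts [hst.1.1, hst.1.2, hst.2])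
  simpa [Finset.card_product, Finset.card_range] using h

end AuxLemmas

namespace HyperData

variable {C : Type*} [Field C] [CharZero C] (H : HyperData C)

open MvPolynomial

lemma degreeOf_lin_le (j : Fin 3) (hj : j ≠ 1) (m : Fin H.M) :
    degreeOf j (H.A m) ≤ 1 ∧ degreeOf j (H.B m) ≤ 1 ∧
      degreeOf j (H.U m) ≤ 1 ∧ degreeOf j (H.V m) ≤ 1 := by
  have hX : ∀ i : Fin 3, degreeOf j (X i : P3 C) ≤ 1 := fun i => by
    rw [degreeOf_X]; split <;> omega
  have hc : ∀ (n : ℕ) (i : Fin 3), degreeOf j ((n : P3 C) * X i) ≤ 1 := fun n i =>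
    (degreeOf_mul_le _ _ _).trans (by rw [degreeOf_natCast', zero_add]; exact hX i)
  have hty : ∀ w : Polynomial C, degreeOf j (toY w : P3 C) ≤ 1 := fun w =>
    (degreeOf_toY_le' w j).trans (by simp [hj])
  refine ⟨?_, ?_, ?_, ?_⟩
  · exact (degreeOf_add_le _ _ _).trans (max_le ((degreeOf_add_le _ _ _).trans
      (max_le (hc _ _) (hc _ _))) (hty _))
  · exact (degreeOf_add_le _ _ _).trans (max_le ((degreeOf_sub_le _ _ _).trans
      (max_le (hc _ _) (hc _ _))) (hty _))
  · exact (degreeOf_add_le _ _ _).trans (max_le ((degreeOf_add_le _ _ _).trans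
      (max_le (hc _ _) (hc _ _))) (hty _))
  · exact (degreeOf_add_le _ _ _).trans (max_le ((degreeOf_sub_le _ _ _).trans
      (max_le (hc _ _) (hc _ _))) (hty _))

lemma degreeOf_Pim_le (j : Fin 3) {dA dB dU dV : ℕ} (i : ℕ) (m : Fin H.M)
    (hA : degreeOf j (H.A m) ≤ dA) (hB : degreeOf j (H.B m) ≤ dB)
    (hU : degreeOf j (H.U m) ≤ dU) (hV : degreeOf j (H.V m) ≤ dV) :
    degreeOf j (H.Pim i m) ≤
      (i * H.a m) * dA + (i * H.b m) * dB +
        ((H.r - i) * H.u m) * dU + ((H.r - i) * H.v m) * dV := by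
  have hU' : degreeOf j (H.U m + ((i * H.u m : ℕ) : P3 C)) ≤ dU :=
    (degreeOf_add_le _ _ _).trans (max_le hU (by rw [degreeOf_natCast']; exact Nat.zero_le _))
  have hV' : degreeOf j (H.V m + ((i * H.v m : ℕ) : P3 C)) ≤ dV :=
    (degreeOf_add_le _ _ _).trans (max_le hV (by rw [degreeOf_natCast']; exact Nat.zero_le _))
  rw [Pim]
  refine (degreeOf_mul_le _ _ _).trans (add_le_add ((degreeOf_mul_le _ _ _).trans
    (add_le_add ((degreeOf_mul_le _ _ _).trans (add_le_add
      ((degreeOf_rf_le _ _ _).trans (Nat.mul_le_mul_left _ hA))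
      ((degreeOf_rf_le _ _ _).trans (Nat.mul_le_mul_left _ hB))))
      ((degreeOf_rf_le _ _ _).trans (Nat.mul_le_mul_left _ hU'))))
      ((degreeOf_rf_le _ _ _).trans (Nat.mul_le_mul_left _ hV')))

lemma degreeOf_P_le (c : ℕ → P3 C) (j : Fin 3) (D eα G : ℕ)
    (dA dB dU dV : Fin H.M → ℕ)
    (hc : ∀ i ≤ H.r, degreeOf j (c i) ≤ D)
    (hα : degreeOf j (toY H.α : P3 C) ≤ eα)
    (hA : ∀ m, degreeOf j (H.A m) ≤ dA m) (hB : ∀ m, degreeOf j (H.B m) ≤ dB m)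
    (hU : ∀ m, degreeOf j (H.U m) ≤ dU m) (hV : ∀ m, degreeOf j (H.V m) ≤ dV m)
    (h1 : eα + ∑ m, (H.a m * dA m + H.b m * dB m) ≤ G)
    (h2 : ∑ m, (H.u m * dU m + H.v m * dV m) ≤ G) :
    degreeOf j (H.P c) ≤ D + degreeOf j H.p + H.r * G := by
  rw [P]
  refine (degreeOf_sum_le _ _ _).trans (Finset.sup_le fun i hi => ?_)
  rw [Finset.mem_range, Nat.lt_succ_iff] at hi
  set SA := ∑ m, (H.a m * dA m + H.b m * dB m) with hSA
  set SB := ∑ m, (H.u m * dU m + H.v m * dV m) with hSB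
  have hhead : degreeOf j (c i * toY H.α ^ i * (⇑(SX3 C))^[i] H.p) ≤
      D + i * eα + degreeOf j H.p :=
    (degreeOf_mul_le _ _ _).trans (add_le_add ((degreeOf_mul_le _ _ _).trans
      (add_le_add (hc i hi) ((degreeOf_pow_le _ _ _).trans (Nat.mul_le_mul_left _ hα))))
      (degreeOf_SX3_iterate_le j i H.p))
  have hprod : degreeOf j (∏ m, H.Pim i m) ≤ i * SA + (H.r - i) * SB := by
    refine le_trans ((degreeOf_prod_le _ _ _).trans (Finset.sum_le_sum fun m _ =>
      H.degreeOf_Pim_le j i m (hA m) (hB m) (hU m) (hV m))) (le_of_eq ?_)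
    rw [hSA, hSB, Finset.mul_sum, Finset.mul_sum, ← Finset.sum_add_distrib]
    exact Finset.sum_congr rfl fun m _ => by ring
  have hfin : i * eα + (i * SA + (H.r - i) * SB) ≤ H.r * G := by
    calc i * eα + (i * SA + (H.r - i) * SB) = i * (eα + SA) + (H.r - i) * SB := by ring
      _ ≤ i * G + (H.r - i) * G :=
        add_le_add (Nat.mul_le_mul_left _ h1) (Nat.mul_le_mul_left _ h2)
      _ = (i + (H.r - i)) * G := (add_mul _ _ _).symm
      _ = H.r * G := by rw [Nat.add_sub_cancel' hi]
  calc degreeOf j (c i * toY H.α ^ i * (⇑(SX3 C))^[i] H.p * ∏ m, H.Pim i m)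
      ≤ (D + i * eα + degreeOf j H.p) + (i * SA + (H.r - i) * SB) :=
        (degreeOf_mul_le _ _ _).trans (add_le_add hhead hprod)
    _ = D + degreeOf j H.p + (i * eα + (i * SA + (H.r - i) * SB)) := by ring
    _ ≤ D + degreeOf j H.p + H.r * G := Nat.add_le_add_left hfin _

end HyperData


open HyperData in
/-- Lemma 1 (degree bounds for `P`): if the coefficients `c_0, …, c_r ∈ C[x,y]` have
`x`-degree `≤ d` and `y`-degree `≤ h`, then
`P = Σ_i c_i α^i S_x^i(p) Π_m P_{i,m}` satisfies `deg_x P ≤ d + θ_x + rμ`,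
`deg_y P ≤ h + θ_y + rξ`, `deg_k P ≤ θ_k + rμ`, and consequently `P` has at most
`(d + θ_x + rμ + 1)(h + θ_y + rξ + 1)(θ_k + rμ + 1)` nonzero monomials. -/
theorem degree_bounds_for_P
    (C : Type*) [Field C] [CharZero C] (H : HyperData C) (d h : ℕ)
    (c : ℕ → P3 C)
    (hck : ∀ i ≤ H.r, degreeOf 2 (c i) = 0)
    (hcd : ∀ i ≤ H.r, degreeOf 0 (c i) ≤ d)
    (hch : ∀ i ≤ H.r, degreeOf 1 (c i) ≤ h) :
    degreeOf 0 (H.P c) ≤ d + H.θx + H.r * H.μ ∧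
    degreeOf 1 (H.P c) ≤ h + H.θy + H.r * H.ξ ∧
    degreeOf 2 (H.P c) ≤ H.θk + H.r * H.μ ∧
    (H.P c).support.card ≤
      (d + H.θx + H.r * H.μ + 1) * (h + H.θy + H.r * H.ξ + 1) * (H.θk + H.r * H.μ + 1) := by
  have hx : degreeOf 0 (H.P c) ≤ d + H.θx + H.r * H.μ := by
    have := H.degreeOf_P_le c 0 d 0 H.μ (fun _ => 1) (fun _ => 1) (fun _ => 1) (fun _ => 1)
      hcd
      (by simpa using degreeOf_toY_le' H.α 0)
      (fun m => (H.degreeOf_lin_le 0 (by decide) m).1)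
      (fun m => (H.degreeOf_lin_le 0 (by decide) m).2.1)
      (fun m => (H.degreeOf_lin_le 0 (by decide) m).2.2.1)
      (fun m => (H.degreeOf_lin_le 0 (by decide) m).2.2.2)
      (by simp only [mul_one, zero_add, HyperData.μ]; exact le_max_left _ _)
      (by simp only [mul_one, HyperData.μ]; exact le_max_right _ _)
    simpa [HyperData.θx] using this
  have hy : degreeOf 1 (H.P c) ≤ h + H.θy + H.r * H.ξ := by
    have := H.degreeOf_P_le c 1 h H.α.natDegree H.ξ
      (fun m => degreeOf 1 (H.A m)) (fun m => degreeOf 1 (H.B m))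
      (fun m => degreeOf 1 (H.U m)) (fun m => degreeOf 1 (H.V m))
      hch
      (by simpa using degreeOf_toY_le' H.α 1)
      (fun m => le_rfl) (fun m => le_rfl) (fun m => le_rfl) (fun m => le_rfl)
      (by simp only [HyperData.ξ]; exact le_max_left _ _)
      (by simp only [HyperData.ξ]; exact le_max_right _ _)
    simpa [HyperData.θy] using this
  have hk : degreeOf 2 (H.P c) ≤ H.θk + H.r * H.μ := by
    have := H.degreeOf_P_le c 2 0 0 H.μ (fun _ => 1) (fun _ => 1) (fun _ => 1) (fun _ => 1)
      (fun i hi => le_of_eq (hck i hi))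
      (by simpa using degreeOf_toY_le' H.α 2)
      (fun m => (H.degreeOf_lin_le 2 (by decide) m).1)
      (fun m => (H.degreeOf_lin_le 2 (by decide) m).2.1)
      (fun m => (H.degreeOf_lin_le 2 (by decide) m).2.2.1)
      (fun m => (H.degreeOf_lin_le 2 (by decide) m).2.2.2)
      (by simp only [mul_one, zero_add, HyperData.μ]; exact le_max_left _ _)
      (by simp only [mul_one, HyperData.μ]; exact le_max_right _ _)
    simpa [HyperData.θk] using this
  refine ⟨hx, hy, hk, ?_⟩
  refine (card_support_le3 (H.P c)).trans ?_
  exact Nat.mul_le_mul (Nat.mul_le_mul (Nat.succ_le_succ hx) (Nat.succ_le_succ hy))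
    (Nat.succ_le_succ hk)
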